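/- Consequently, free energy is non-increasing under a stochastic evolution with Gibbs stationary distribution: let E : Fin n → ℝ, T, k > 0, π the Gibbs distribution, and K a row-stochastic matrix with πK = π. Then for any distribution p, F(pK) ≤ F(p), where F(p) = ∑ p i E i - k T H(p). -/

import Mathlib

open Real Finset

theorem free_energy_nonincreasing_under_markov_evolution
    (n : ℕ) (hn : 1 ≤ n) (E : Fin n → ℝ) (T k : ℝ) (hT : 0 < T) (hk : 0 < k)
    (Z : ℝ) (hZ : Z = ∑ i, Real.exp (-E i / (k * T)))
    (peq : Fin n → ℝ) (hpeq : ∀ i, peq i = Real.exp (-E i / (k * T)) / Z)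
    (K : Fin n → Fin n → ℝ)
    (hK : ∀ i j, 0 ≤ K i j) (hKrow : ∀ i, ∑ j, K i j = 1)
    (hstat : ∀ j, ∑ i, peq i * K i j = peq j)
    (F : (Fin n → ℝ) → ℝ)
    (hF : ∀ q : Fin n → ℝ, F q = ∑ i, q i * E i - k * T * (-∑ i, q i * Real.log (q i)))
    (p : Fin n → ℝ) (hp : ∀ i, 0 ≤ p i) (hps : ∑ i, p i = 1) :
    F (fun j => ∑ i, p i * K i j) ≤ F p := by
  have hc : (0:ℝ) < k * T := mul_pos hk hT
  have hne : Nonempty (Fin n) := Fin.pos_iff_nonempty.mp hn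
  have hZpos : 0 < Z := by
    rw [hZ]; exact Finset.sum_pos (fun i _ => Real.exp_pos _) Finset.univ_nonempty
  have hpeqpos : ∀ i, 0 < peq i := fun i => by
    rw [hpeq]; exact div_pos (Real.exp_pos _) hZpos
  -- key identity
  have key : ∀ q : Fin n → ℝ, (∀ i, 0 ≤ q i) → (∑ i, q i = 1) →
      F q = k * T * ∑ j, peq j * ((q j / peq j) * Real.log (q j / peq j))
            - k * T * Real.log Z := by
    intro q hq hqs
    have hterm : ∀ j, k * T * (peq j * ((q j / peq j) * Real.log (q j / peq j)))
        = q j * E j + k * T * (q j * Real.log (q j)) + k * T * Real.log Z * q j := by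
      intro j
      rcases eq_or_lt_of_le (hq j) with h0 | h0
      · rw [← h0]; simp
      · have hpne : peq j ≠ 0 := (hpeqpos j).ne'
        have hqne : q j ≠ 0 := h0.ne'
        have hlogq : Real.log (q j / peq j) = Real.log (q j) - Real.log (peq j) :=
          Real.log_div hqne hpne
        have hlogpeq : Real.log (peq j) = -E j / (k * T) - Real.log Z := by
          rw [hpeq, Real.log_div (Real.exp_ne_zero _) hZpos.ne', Real.log_exp]
        rw [hlogq, hlogpeq]
        field_simp
        ring
    rw [hF]
    rw [Finset.mul_sum, Finset.sum_congr rfl fun j _ => hterm j]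
    rw [Finset.sum_add_distrib, Finset.sum_add_distrib, ← Finset.mul_sum, ← Finset.mul_sum,
      hqs, mul_one]
    ring
  -- pK is a distribution
  have hpK : ∀ j, 0 ≤ ∑ i, p i * K i j := fun j =>
    Finset.sum_nonneg fun i _ => mul_nonneg (hp i) (hK i j)
  have hpKs : ∑ j, ∑ i, p i * K i j = 1 := by
    rw [Finset.sum_comm]
    simp_rw [← Finset.mul_sum, hKrow, mul_one, hps]
  rw [key p hp hps, key (fun j => ∑ i, p i * K i j) hpK hpKs]
  have main : ∑ j, peq j * (((∑ i, p i * K i j) / peq j) *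
      Real.log ((∑ i, p i * K i j) / peq j))
      ≤ ∑ i, peq i * ((p i / peq i) * Real.log (p i / peq i)) := by
    have jensen : ∀ j, ((∑ i, p i * K i j) / peq j) * Real.log ((∑ i, p i * K i j) / peq j)
        ≤ ∑ i, (peq i * K i j / peq j) * ((p i / peq i) * Real.log (p i / peq i)) := by
      intro j
      have hw0 : ∀ i ∈ Finset.univ, 0 ≤ peq i * K i j / peq j := fun i _ =>
        div_nonneg (mul_nonneg (hpeqpos i).le (hK i j)) (hpeqpos j).le
      have hw1 : ∑ i, peq i * K i j / peq j = 1 := by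
        rw [← Finset.sum_div, hstat]; exact div_self (hpeqpos j).ne'
      have hz : ∀ i ∈ Finset.univ, p i / peq i ∈ Set.Ici (0:ℝ) := fun i _ =>
        div_nonneg (hp i) (hpeqpos i).le
      have := Real.convexOn_mul_log.map_sum_le hw0 hw1 hz
      simp only [smul_eq_mul] at this
      have heq : (∑ i, (peq i * K i j / peq j) * (p i / peq i)) = (∑ i, p i * K i j) / peq j := by
        rw [eq_div_iff (hpeqpos j).ne', Finset.sum_mul]
        refine Finset.sum_congr rfl fun i _ => ?_
        field_simp [(hpeqpos i).ne', (hpeqpos j).ne']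
      rw [heq] at this
      exact this
    calc ∑ j, peq j * (((∑ i, p i * K i j) / peq j) * Real.log ((∑ i, p i * K i j) / peq j))
        ≤ ∑ j, peq j * ∑ i, (peq i * K i j / peq j) * ((p i / peq i) * Real.log (p i / peq i)) :=
          Finset.sum_le_sum fun j _ => mul_le_mul_of_nonneg_left (jensen j) (hpeqpos j).le
      _ = ∑ j, ∑ i, peq i * K i j * ((p i / peq i) * Real.log (p i / peq i)) := by
          refine Finset.sum_congr rfl fun j _ => ?_
          rw [Finset.mul_sum]
          refine Finset.sum_congr rfl fun i _ => ?_
          rw [div_mul_eq_mul_div, mul_div_assoc']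
          rw [mul_comm (peq j)]
          rw [mul_div_assoc, div_self (hpeqpos j).ne', mul_one]
      _ = ∑ i, peq i * ((p i / peq i) * Real.log (p i / peq i)) := by
          rw [Finset.sum_comm]
          refine Finset.sum_congr rfl fun i _ => ?_
          rw [← Finset.sum_mul, ← Finset.mul_sum, hKrow, mul_one]
  have := mul_le_mul_of_nonneg_left main hc.le
  linarith
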